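/- The gap between the outer and inner bounds on the secrecy capacity vanishes as the in-block memory length grows: G(L) → 0 as L → ∞; equivalently, U(L) - I(L) → 0. -/

import Mathlib

open Finset Filter Topology

/-- Binary entropy function with base-2 logarithm. `Real.logb 2 0 = 0`, so
`H2 0 = H2 1 = 0` automatically. -/
noncomputable def H2 (p : ℝ) : ℝ :=
  -(p * Real.logb 2 p) - (1 - p) * Real.logb 2 (1 - p)

/-- Partial sums `s_j = ∑_{k=1}^j c_k` of the beam-budget sequence. -/
noncomputable def s (K B : ℝ) : ℕ → ℝ
  | 0 => 0
  | (j+1) => s K B j + min ((K - s K B j) / 2) B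

/-- The beam-budget sequence: `c_0 = 0` and `c_j = min((K - s_{j-1})/2, B)` for `j ≥ 1`. -/
noncomputable def c (K B : ℝ) : ℕ → ℝ
  | 0 => 0
  | (j+1) => min ((K - s K B j) / 2) B

/-- The `j`-th term of the outer bound (Theorem 1), for `j ≥ 1`. -/
noncomputable def t (K B : ℝ) (j : ℕ) : ℝ :=
  (1 - s K B (j-1) / K) * H2 (c K B j / (K - s K B (j-1))) + s K B (j-1) / K

/-- The outer-bound (Theorem 1) expression `U(L)`. -/
noncomputable def U (K B : ℝ) (L : ℕ) : ℝ :=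
  (1 / (L : ℝ)) * ∑ j ∈ Finset.Icc 1 L, t K B j

/-- The `j`-th eavesdropper-leakage term, for `j ≥ 1` (natural subtraction makes the
middle term vanish at `j = 1` and the final sum empty for `j ≤ 3`). -/
noncomputable def g (K B : ℝ) (j : ℕ) : ℝ :=
  ((K - s K B (j-1)) / K) * H2 (c K B j / K)
  + (c K B (j-1) * (K - s K B (j-2)) / K^2) *
      H2 ((1/2) * c K B (j-1) / (K - s K B (j-2)))
  + ∑ k ∈ Finset.Icc 1 (j-3),
      (1/K) * ((c K B (k+1))^2 / K^2) * (1/2 : ℝ)^(2*(j-k-2)-1)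

/-- The gap `G(L)` between the outer and inner bounds. -/
noncomputable def G (K B : ℝ) (L : ℕ) : ℝ :=
  (1 / (L : ℝ)) * ∑ j ∈ Finset.Icc 1 L, g K B j

/-- The inner-bound (Theorem 2) expression `I(L) = U(L) - G(L)`. -/
noncomputable def Ib (K B : ℝ) (L : ℕ) : ℝ := U K B L - G K B L

lemma H2_eq (p : ℝ) : H2 p = Real.binEntropy p / Real.log 2 := by
  unfold H2 Real.binEntropy Real.logb
  rw [Real.log_inv, Real.log_inv]; ring

lemma H2_nonneg {p : ℝ} (h0 : 0 ≤ p) (h1 : p ≤ 1) : 0 ≤ H2 p := by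
  rw [H2_eq]
  exact div_nonneg (Real.binEntropy_nonneg h0 h1) (Real.log_nonneg one_le_two)

lemma H2_le_one (p : ℝ) : H2 p ≤ 1 := by
  rw [H2_eq, div_le_one (Real.log_pos one_lt_two)]
  exact Real.binEntropy_le_log_two

section rec
variable {K B : ℝ} (hK : 0 < K) (hB : 0 < B)
include hK hB

lemma s_bounds : ∀ j, 0 ≤ s K B j ∧ s K B j ≤ K := by
  intro j
  induction j with
  | zero => simpa [s] using hK.le
  | succ j ih =>
    obtain ⟨h0, h1⟩ := ih
    have hm1 : 0 ≤ min ((K - s K B j) / 2) B := le_min (by linarith) hB.le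
    have hm2 : min ((K - s K B j) / 2) B ≤ (K - s K B j) / 2 := min_le_left _ _
    exact ⟨by show 0 ≤ s K B j + min ((K - s K B j) / 2) B; linarith,
      by show s K B j + min ((K - s K B j) / 2) B ≤ K; linarith⟩

lemma d_nonneg (j : ℕ) : 0 ≤ K - s K B j := by
  have := (s_bounds hK hB j).2; linarith

lemma c_nonneg (j : ℕ) : 0 ≤ c K B j := by
  cases j with
  | zero => simp [c]
  | succ j => exact le_min (by have := d_nonneg hK hB j; linarith) hB.le

omit hK hB in
lemma c_succ_le (j : ℕ) : c K B (j+1) ≤ (K - s K B j) / 2 := min_le_left _ _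

lemma d_decay (j : ℕ) :
    K - s K B (j+1) ≤ max (1/2) (1 - B/K) * (K - s K B j) := by
  set q := max (1/2 : ℝ) (1 - B/K) with hq
  have hd0 : 0 ≤ K - s K B j := d_nonneg hK hB j
  have hs0 : 0 ≤ s K B j := (s_bounds hK hB j).1
  have h1 : (1/2 : ℝ) ≤ q := le_max_left _ _
  have h2 : 1 - B/K ≤ q := le_max_right _ _
  show K - (s K B j + min ((K - s K B j) / 2) B) ≤ q * (K - s K B j)
  rcases le_total ((K - s K B j) / 2) B with h | h
  · rw [min_eq_left h]; nlinarith
  · rw [min_eq_right h]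
    have e : (1 - B/K) * (K - s K B j) ≤ q * (K - s K B j) :=
      mul_le_mul_of_nonneg_right h2 hd0
    have e2 : K - s K B j - B ≤ (1 - B/K) * (K - s K B j) := by
      have : B / K * (K - s K B j) ≤ B := by
        rw [div_mul_eq_mul_div, div_le_iff₀ hK]; nlinarith
      nlinarith
    linarith

lemma d_le (j : ℕ) : K - s K B j ≤ K * (max (1/2) (1 - B/K))^j := by
  set q := max (1/2 : ℝ) (1 - B/K) with hq
  have hq0 : (0:ℝ) ≤ q := le_trans (by norm_num) (le_max_left _ _)
  induction j with
  | zero => simp [s]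
  | succ j ih =>
    calc K - s K B (j+1) ≤ q * (K - s K B j) := d_decay hK hB j
      _ ≤ q * (K * q^j) := mul_le_mul_of_nonneg_left ih hq0
      _ = K * q^(j+1) := by ring

/-- The argument of the middle `H2` in `g` lies in `[0,1]`. -/
lemma arg2_mem (i : ℕ) : 0 ≤ (1/2) * c K B (i+1) / (K - s K B i) ∧
    (1/2) * c K B (i+1) / (K - s K B i) ≤ 1 := by
  have hd0 : 0 ≤ K - s K B i := d_nonneg hK hB i
  have hc0 : 0 ≤ c K B (i+1) := c_nonneg hK hB (i+1)
  have hc1 : c K B (i+1) ≤ (K - s K B i) / 2 := c_succ_le i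
  rcases eq_or_lt_of_le hd0 with h | h
  · have hc : c K B (i+1) = 0 := le_antisymm (by linarith) hc0
    rw [hc, ← h]; norm_num
  · constructor
    · positivity
    · rw [div_le_one h]; linarith

/-- Every term of `g` at index `j ≥ 1` is nonnegative. -/
lemma g_nonneg (j : ℕ) : 0 ≤ g K B j := by
  have hd1 : 0 ≤ K - s K B (j-1) := d_nonneg hK hB _
  have hd2 : 0 ≤ K - s K B (j-2) := d_nonneg hK hB _
  have hK2 : (0:ℝ) < K^2 := by positivity
  have t1 : 0 ≤ ((K - s K B (j-1)) / K) * H2 (c K B j / K) := by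
    apply mul_nonneg (div_nonneg hd1 hK.le)
    apply H2_nonneg (div_nonneg (c_nonneg hK hB j) hK.le)
    rw [div_le_one hK]
    cases j with
    | zero => simpa [c] using hK.le
    | succ i =>
      have := c_succ_le (K := K) (B := B) i
      have := d_nonneg hK hB i
      have := (s_bounds hK hB i).1
      linarith
  have t2 : 0 ≤ (c K B (j-1) * (K - s K B (j-2)) / K^2) *
      H2 ((1/2) * c K B (j-1) / (K - s K B (j-2))) := by
    apply mul_nonneg (div_nonneg (mul_nonneg (c_nonneg hK hB _) hd2) hK2.le)
    cases hj : j - 1 with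
    | zero => simp [c, H2]
    | succ i =>
      have hji : j - 2 = i := by omega
      rw [hji]
      exact H2_nonneg (arg2_mem hK hB i).1 (arg2_mem hK hB i).2
  have t3 : 0 ≤ ∑ k ∈ Finset.Icc 1 (j-3),
      (1/K) * ((c K B (k+1))^2 / K^2) * (1/2 : ℝ)^(2*(j-k-2)-1) := by
    apply Finset.sum_nonneg
    intro k _
    positivity
  unfold g; linarith

end rec

section bound
variable {K B : ℝ} (hK : 0 < K) (hB : 0 < B)
include hK hB

lemma q_facts : 1/2 ≤ max (1/2 : ℝ) (1 - B/K) ∧ max (1/2 : ℝ) (1 - B/K) < 1 := by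
  refine ⟨le_max_left _ _, max_lt (by norm_num) ?_⟩
  have : 0 < B / K := div_pos hB hK
  linarith

lemma g_le (m : ℕ) :
    g K B (m+3) ≤ (1 / max (1/2 : ℝ) (1 - B/K)) * (max (1/2 : ℝ) (1 - B/K))^(m+3)
      + (1/(2*(max (1/2 : ℝ) (1 - B/K))^4)) * ((max (1/2 : ℝ) (1 - B/K))^2)^(m+3)
      + (1/(2*K*(max (1/2 : ℝ) (1 - B/K))^4)) * ((m:ℝ)+3) *
          ((max (1/2 : ℝ) (1 - B/K))^2)^(m+3) := by
  set q := max (1/2 : ℝ) (1 - B/K) with hqdef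
  obtain ⟨hqh, hq1⟩ := q_facts hK hB
  have hq0 : (0:ℝ) < q := by linarith
  have e1 : m+3-1 = m+2 := by omega
  have e2 : m+3-2 = m+1 := by omega
  have e3 : m+3-3 = m := by omega
  unfold g
  rw [e1, e2, e3]
  have hA : ((K - s K B (m+2)) / K) * H2 (c K B (m+3) / K) ≤ (1/q) * q^(m+3) := by
    have h1 : ((K - s K B (m+2)) / K) * H2 (c K B (m+3) / K) ≤ (K - s K B (m+2)) / K :=
      mul_le_of_le_one_right (div_nonneg (d_nonneg hK hB _) hK.le) (H2_le_one _)
    have h2 : (K - s K B (m+2)) / K ≤ q^(m+2) := by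
      rw [div_le_iff₀ hK]
      have := d_le hK hB (m+2)
      linarith [this]
    have h3 : (1/q) * q^(m+3) = q^(m+2) := by
      rw [pow_succ]; field_simp
    linarith
  have hBt : (c K B (m+2) * (K - s K B (m+1)) / K^2) *
      H2 ((1/2) * c K B (m+2) / (K - s K B (m+1)))
      ≤ (1/(2*q^4)) * (q^2)^(m+3) := by
    have harg := arg2_mem hK hB (m+1)
    have hD0 : 0 ≤ K - s K B (m+1) := d_nonneg hK hB _
    have hD : K - s K B (m+1) ≤ K * q^(m+1) := d_le hK hB _
    have hc0 : 0 ≤ c K B (m+2) := c_nonneg hK hB _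
    have hcD : c K B (m+2) ≤ (K - s K B (m+1)) / 2 := c_succ_le (m+1)
    have h1 : (c K B (m+2) * (K - s K B (m+1)) / K^2) *
        H2 ((1/2) * c K B (m+2) / (K - s K B (m+1)))
        ≤ c K B (m+2) * (K - s K B (m+1)) / K^2 :=
      mul_le_of_le_one_right (by positivity) (H2_le_one _)
    have h2 : c K B (m+2) * (K - s K B (m+1)) / K^2 ≤ (q^(m+1))^2 / 2 := by
      rw [div_le_div_iff₀ (by positivity) (by norm_num : (0:ℝ) < 2)]
      have hKq : (0:ℝ) ≤ K * q^(m+1) := by positivity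
      nlinarith [mul_le_mul hD hD hD0 hKq]
    have h3 : (1/(2*q^4)) * (q^2)^(m+3) = (q^(m+1))^2 / 2 := by
      have : (q^2)^(m+3) = (q^(m+1))^2 * q^4 := by
        rw [← pow_mul, ← pow_mul]; ring_nf
      rw [this]; field_simp
    linarith
  have hS : (∑ k ∈ Finset.Icc 1 m,
      (1/K) * ((c K B (k+1))^2 / K^2) * (1/2 : ℝ)^(2*(m+3-k-2)-1))
      ≤ (1/(2*K*q^4)) * ((m:ℝ)+3) * (q^2)^(m+3) := by
    have hterm : ∀ k ∈ Finset.Icc 1 m,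
        (1/K) * ((c K B (k+1))^2 / K^2) * (1/2 : ℝ)^(2*(m+3-k-2)-1)
        ≤ (q^2)^(m+1) / (2*K) := by
      intro k hk
      obtain ⟨hk1, hk2⟩ := Finset.mem_Icc.mp hk
      have hnk : m+3-k-2 = m+1-k := by omega
      rw [hnk]
      set n := m+1-k with hn
      have hn1 : 1 ≤ n := by omega
      have hkn : k + n = m+1 := by omega
      -- (1/2)^(2n-1) = 2 * (1/4)^n
      have hpow : (1/2 : ℝ)^(2*n-1) = 2 * (1/4 : ℝ)^n := by
        have h4 : (1/4 : ℝ)^n = (1/2 : ℝ)^(2*n) := by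
          rw [pow_mul]; norm_num
        have h2n : 2*n = (2*n-1)+1 := by omega
        rw [h4, h2n, pow_succ]
        have : 2*n-1+1-1 = 2*n-1 := by omega
        ring_nf
        congr 1
        omega
      -- c bound
      have hc0 : 0 ≤ c K B (k+1) := c_nonneg hK hB _
      have hc : c K B (k+1) ≤ K * q^k / 2 := by
        have := c_succ_le (K := K) (B := B) k
        have := d_le hK hB k
        linarith
      have hcsq : (c K B (k+1))^2 ≤ (K * q^k / 2)^2 := by
        apply sq_le_sq' (by linarith) hc
      have hq2 : (1/4 : ℝ)^n ≤ (q^2)^n := by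
        apply pow_le_pow_left₀ (by norm_num)
        nlinarith
      have hsplit : (q^2)^k * (q^2)^n = (q^2)^(m+1) := by
        rw [← pow_add, hkn]
      have hqk : (q^k)^2 = (q^2)^k := by
        rw [← pow_mul, ← pow_mul]; ring_nf
      calc (1/K) * ((c K B (k+1))^2 / K^2) * (1/2 : ℝ)^(2*n-1)
          ≤ (1/K) * ((K * q^k / 2)^2 / K^2) * (2 * (1/4 : ℝ)^n) := by
            rw [hpow]
            apply mul_le_mul_of_nonneg_right _ (by positivity)
            apply mul_le_mul_of_nonneg_left _ (by positivity)
            exact div_le_div_of_nonneg_right hcsq (by positivity) |>.trans_eq rfl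
        _ = (q^2)^k * (1/4 : ℝ)^n / (2*K) := by
            rw [← hqk]; field_simp
        _ ≤ (q^2)^k * (q^2)^n / (2*K) := by
            apply div_le_div_of_nonneg_right _ (by positivity)
            exact mul_le_mul_of_nonneg_left hq2 (by positivity)
        _ = (q^2)^(m+1) / (2*K) := by rw [hsplit]
    have hsum := Finset.sum_le_sum hterm
    rw [Finset.sum_const, Nat.card_Icc] at hsum
    have hcard : (m+1-1) = m := by omega
    rw [hcard, nsmul_eq_mul] at hsum
    have hfin : (m:ℝ) * ((q^2)^(m+1) / (2*K)) ≤ (1/(2*K*q^4)) * ((m:ℝ)+3) * (q^2)^(m+3) := by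
      have hid : (1/(2*K*q^4)) * ((m:ℝ)+3) * (q^2)^(m+3)
          = ((m:ℝ)+3) * ((q^2)^(m+1) / (2*K)) := by
        have : (q^2)^(m+3) = (q^2)^(m+1) * q^4 := by
          rw [← pow_mul, ← pow_mul]; ring_nf
        rw [this]; field_simp
      rw [hid]
      apply mul_le_mul_of_nonneg_right _ (by positivity)
      linarith [(Nat.cast_nonneg m : (0:ℝ) ≤ m)]
    exact hsum.trans hfin
  exact add_le_add (add_le_add hA hBt) hS

end bound

lemma g_tendsto {K B : ℝ} (hK : 0 < K) (hB : 0 < B) :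
    Tendsto (fun j : ℕ => g K B j) atTop (𝓝 0) := by
  set q := max (1/2 : ℝ) (1 - B/K) with hqdef
  obtain ⟨hqh, hq1⟩ := q_facts hK hB
  have hq0 : (0:ℝ) < q := by linarith
  have hq20 : (0:ℝ) ≤ q^2 := by positivity
  have hq21 : q^2 < 1 := by nlinarith
  -- the dominating sequence tends to 0
  have hF : Tendsto (fun j : ℕ => (1/q) * q^j + (1/(2*q^4)) * (q^2)^j
      + (1/(2*K*q^4)) * (j:ℝ) * (q^2)^j) atTop (𝓝 0) := by
    have h1 : Tendsto (fun j : ℕ => (1/q) * q^j) atTop (𝓝 0) := by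
      have := (tendsto_pow_atTop_nhds_zero_of_lt_one hq0.le hq1).const_mul (1/q)
      rwa [mul_zero] at this
    have h2 : Tendsto (fun j : ℕ => (1/(2*q^4)) * (q^2)^j) atTop (𝓝 0) := by
      have := (tendsto_pow_atTop_nhds_zero_of_lt_one hq20 hq21).const_mul (1/(2*q^4))
      rwa [mul_zero] at this
    have h3 : Tendsto (fun j : ℕ => (j:ℝ) * (q^2)^j) atTop (𝓝 0) := by
      have := (summable_pow_mul_geometric_of_norm_lt_one 1
        (r := q^2) (by rwa [Real.norm_eq_abs, abs_of_nonneg hq20])).tendsto_atTop_zero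
      simpa using this
    have h3' : Tendsto (fun j : ℕ => (1/(2*K*q^4)) * ((j:ℝ) * (q^2)^j)) atTop (𝓝 0) := by
      have := h3.const_mul (1/(2*K*q^4))
      rwa [mul_zero] at this
    have := (h1.add h2).add h3'
    simp only [add_zero] at this
    convert this using 2 with j
    ring
  apply squeeze_zero' (g := fun j : ℕ => (1/q) * q^j + (1/(2*q^4)) * (q^2)^j
      + (1/(2*K*q^4)) * (j:ℝ) * (q^2)^j) _ _ hF
  · exact Eventually.of_forall fun j => g_nonneg hK hB j
  · filter_upwards [eventually_ge_atTop 3] with j hj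
    obtain ⟨m, rfl⟩ := Nat.exists_eq_add_of_le' hj
    have := g_le hK hB m
    rw [← hqdef] at this
    push_cast at this ⊢
    linarith

theorem stmt_15 (K : ℕ) (hK : 2 ≤ K) (B : ℝ) (hB : 0 < B) :
    Tendsto (fun L : ℕ => G K B L) atTop (𝓝 0) ∧
    Tendsto (fun L : ℕ => U K B L - Ib K B L) atTop (𝓝 0) := by
  have hKpos : (0:ℝ) < (K:ℝ) := by
    have : (0:ℕ) < K := by omega
    exact_mod_cast this
  have hg : Tendsto (fun i : ℕ => g K B (i+1)) atTop (𝓝 0) := by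
    have := g_tendsto hKpos hB
    exact this.comp (tendsto_add_atTop_nat 1)
  have hGeq : ∀ L : ℕ, G (K:ℝ) B L = ((L:ℝ))⁻¹ * ∑ i ∈ Finset.range L, g K B (i+1) := by
    intro L
    unfold G
    rw [one_div, ← Finset.Ico_add_one_right_eq_Icc, Finset.sum_Ico_eq_sum_range]
    congr 1
    exact Finset.sum_congr (by simp) fun i _ => by rw [add_comm]
  have hG : Tendsto (fun L : ℕ => G (K:ℝ) B L) atTop (𝓝 0) := by
    have := hg.cesaro
    simpa only [← hGeq] using this
  refine ⟨hG, ?_⟩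
  have : (fun L : ℕ => U (K:ℝ) B L - Ib (K:ℝ) B L) = fun L => G (K:ℝ) B L := by
    funext L
    simp [Ib]
  rw [this]
  exact hG
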